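/- For natural numbers b, c, N with N ≤ b and N ≤ c, and any natural number a, the sequence k ↦ T_k = Σ_{i=0}^N C(b,i) C(c,N-i) C(a+b+c-i, k) is log-concave: T_k^2 ≥ T_{k-1} T_{k+1} for all k ≥ 1. -/

import Mathlib

namespace TLC

/-- The Pascal step operator: `(A u) k = u k + u (k-1)` with `u (-1) = 0`. -/
def Aop (u : ℕ → ℕ) : ℕ → ℕ := fun k => u k + (if k = 0 then 0 else u (k - 1))

/-- Log-concavity of a sequence. -/
def LC (u : ℕ → ℕ) : Prop := ∀ k, u k * u (k + 2) ≤ u (k + 1) ^ 2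

/-- No internal zeros (support is a downward-closed interval). -/
def Supp (u : ℕ → ℕ) : Prop := ∀ k, u (k + 1) ≠ 0 → u k ≠ 0

lemma Aop_choose (n : ℕ) : Aop (fun k => n.choose k) = fun k => (n + 1).choose k := by
  funext k
  cases k with
  | zero => simp [Aop]
  | succ k => simp [Aop, Nat.choose_succ_succ' (n := n) (k := k), Nat.add_comm]

lemma Aop_sum (s : Finset ℕ) (f : ℕ → ℕ → ℕ) :
    Aop (fun k => ∑ i ∈ s, f i k) = fun k => ∑ i ∈ s, Aop (f i) k := by
  funext k
  simp only [Aop]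
  rw [Finset.sum_add_distrib]
  congr 1
  split <;> simp

lemma Supp_Aop {u : ℕ → ℕ} (hs : Supp u) : Supp (Aop u) := by
  intro k h
  have huk : u k ≠ 0 := by
    rcases Nat.eq_zero_or_pos (u (k + 1)) with h1 | h1
    · simp only [Aop, Nat.add_sub_cancel] at h
      rcases Nat.eq_zero_or_pos (u k) with h2 | h2
      · simp [h1, h2] at h
      · exact h2.ne'
    · exact hs k h1.ne'
  have : 0 < u k := Nat.pos_of_ne_zero huk
  have : 0 < Aop u k := by simp only [Aop]; omega
  exact this.ne'

lemma cross {u : ℕ → ℕ} (hlc : LC u) (hs : Supp u) (k : ℕ) :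
    u k * u (k + 3) ≤ u (k + 1) * u (k + 2) := by
  rcases Nat.eq_zero_or_pos (u (k + 3)) with h3 | h3
  · simp [h3]
  have h2 : 0 < u (k + 2) := Nat.pos_of_ne_zero (hs _ h3.ne')
  have h1 : 0 < u (k + 1) := Nat.pos_of_ne_zero (hs _ h2.ne')
  have A := hlc k
  have B := hlc (k + 1)
  have hmul : (u k * u (k + 3)) * (u (k + 1) * u (k + 2)) ≤
      (u (k + 1) * u (k + 2)) * (u (k + 1) * u (k + 2)) := by
    calc (u k * u (k + 3)) * (u (k + 1) * u (k + 2))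
        = (u k * u (k + 2)) * (u (k + 1) * u (k + 3)) := by ring
      _ ≤ u (k + 1) ^ 2 * u (k + 2) ^ 2 :=
          Nat.mul_le_mul (by nlinarith) (by nlinarith)
      _ = (u (k + 1) * u (k + 2)) * (u (k + 1) * u (k + 2)) := by ring
  exact Nat.le_of_mul_le_mul_right hmul (Nat.mul_pos h1 h2)

lemma LC_Aop {u : ℕ → ℕ} (hlc : LC u) (hs : Supp u) : LC (Aop u) := by
  intro k
  cases k with
  | zero =>
      simp only [Aop]
      have := hlc 0
      simp only [if_pos rfl, if_neg (by omega : (1 : ℕ) ≠ 0), if_neg (by omega : (2 : ℕ) ≠ 0)]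
      norm_num
      nlinarith [this]
  | succ k =>
      simp only [Aop, if_neg (Nat.succ_ne_zero _)]
      show (u (k + 1) + u k) * (u (k + 3) + u (k + 2)) ≤ (u (k + 2) + u (k + 1)) ^ 2
      have A := hlc k
      have B := hlc (k + 1)
      have C := cross hlc hs k
      nlinarith [A, B, C]

lemma LC_iter {u : ℕ → ℕ} (hlc : LC u) (hs : Supp u) (m : ℕ) : LC (Aop^[m] u) := by
  induction m with
  | zero => exact hlc
  | succ m ih =>
      rw [Function.iterate_succ_apply']
      have hsm : Supp (Aop^[m] u) := by
        clear ih
        induction m with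
        | zero => exact hs
        | succ m ih => rw [Function.iterate_succ_apply']; exact Supp_Aop ih
      exact LC_Aop ih hsm

end TLC

open TLC in
theorem T_log_concave (a b c N : ℕ) (hNb : N ≤ b) (hNc : N ≤ c) :
    ∀ k, 1 ≤ k →
      (∑ i ∈ Finset.range (N + 1), b.choose i * c.choose (N - i) * (a + b + c - i).choose k) ^ 2 ≥
        (∑ i ∈ Finset.range (N + 1),
            b.choose i * c.choose (N - i) * (a + b + c - i).choose (k - 1)) *
        (∑ i ∈ Finset.range (N + 1),
            b.choose i * c.choose (N - i) * (a + b + c - i).choose (k + 1)) := by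
  -- base sequence
  set P0 : ℕ → ℕ := fun k => if k ≤ N then c.choose k * (b + c - k).choose (N - k) else 0 with hP0
  -- base identity
  have base : ∀ k, P0 k = ∑ i ∈ Finset.range (N + 1),
      b.choose i * c.choose (N - i) * (N - i).choose k := by
    intro k
    by_cases hk : k ≤ N
    · rw [hP0]
      simp only [if_pos hk]
      rw [show Finset.range (N + 1) = Finset.range (N - k + 1) ∪
          (Finset.range (N + 1) \ Finset.range (N - k + 1)) by
          rw [Finset.union_sdiff_of_subset]
          exact Finset.range_subset_range.mpr (by omega)]
      rw [Finset.sum_union (Finset.disjoint_sdiff)]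
      have h2 : ∑ i ∈ Finset.range (N + 1) \ Finset.range (N - k + 1),
          b.choose i * c.choose (N - i) * (N - i).choose k = 0 := by
        apply Finset.sum_eq_zero
        intro i hi
        simp only [Finset.mem_sdiff, Finset.mem_range] at hi
        have : N - i < k := by omega
        rw [Nat.choose_eq_zero_of_lt this, Nat.mul_zero]
      rw [h2, Nat.add_zero]
      have h1 : ∀ i ∈ Finset.range (N - k + 1),
          b.choose i * c.choose (N - i) * (N - i).choose k
            = c.choose k * (b.choose i * (c - k).choose (N - k - i)) := by
        intro i hi
        simp only [Finset.mem_range] at hi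
        have hik : k ≤ N - i := by omega
        rw [Nat.mul_assoc, Nat.choose_mul hik]
        have : c - k = c - k := rfl
        have e : N - i - k = N - k - i := by omega
        rw [e]; ring
      rw [Finset.sum_congr rfl h1, ← Finset.mul_sum]
      congr 1
      have hv := Nat.add_choose_eq b (c - k) (N - k)
      rw [Finset.Nat.sum_antidiagonal_eq_sum_range_succ_mk] at hv
      have : b + (c - k) = b + c - k := by omega
      rw [this] at hv
      rw [← hv]
    · rw [hP0]
      simp only [if_neg hk]
      symm
      apply Finset.sum_eq_zero
      intro i hi
      simp only [Finset.mem_range] at hi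
      rw [Nat.choose_eq_zero_of_lt (by omega : N - i < k), Nat.mul_zero]
  -- P0 is log-concave
  have hlc : LC P0 := by
    intro k
    by_cases hk : k + 2 ≤ N
    · rw [hP0]
      simp only [if_pos hk, if_pos (by omega : k ≤ N), if_pos (by omega : k + 1 ≤ N)]
      -- abbreviations
      obtain ⟨d, hd⟩ : ∃ d, c = k + 2 + d := ⟨c - (k + 2), by omega⟩
      obtain ⟨e, he⟩ : ∃ e, N = k + 2 + e := ⟨N - (k + 2), by omega⟩
      set x0 := c.choose k
      set x1 := c.choose (k + 1)
      set x2 := c.choose (k + 2)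
      set y0 := (b + c - k).choose (N - k)
      set y1 := (b + c - (k + 1)).choose (N - (k + 1))
      set y2 := (b + c - (k + 2)).choose (N - (k + 2))
      have hx1 : x1 * (k + 1) = x0 * (d + 2) := by
        have := Nat.choose_succ_right_eq c k
        rwa [show c - k = d + 2 by omega] at this
      have hx2 : x2 * (k + 2) = x1 * (d + 1) := by
        have := Nat.choose_succ_right_eq c (k + 1)
        rwa [show c - (k + 1) = d + 1 by omega] at this
      have hy1 : y0 * (e + 2) = (b + d + 2) * y1 := by
        have := Nat.add_one_mul_choose_eq (b + c - (k + 1)) (N - (k + 1))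
        rw [show (b + c - (k+1)) + 1 = b + c - k by omega,
            show (N - (k+1)) + 1 = N - k by omega] at this
        rw [show (e : ℕ) + 2 = N - k by omega, show b + d + 2 = b + c - k by omega]
        rw [this]
      have hy2 : y1 * (e + 1) = (b + d + 1) * y2 := by
        have := Nat.add_one_mul_choose_eq (b + c - (k + 2)) (N - (k + 2))
        rw [show (b + c - (k+2)) + 1 = b + c - (k+1) by omega,
            show (N - (k+2)) + 1 = N - (k+1) by omega] at this
        rw [show (e : ℕ) + 1 = N - (k + 1) by omega,
            show b + d + 1 = b + c - (k + 1) by omega]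
        rw [this]
      -- scalar inequality
      have hscal : (k + 1) * (d + 1) * (e + 1) * (b + d + 2)
          ≤ (d + 2) * (k + 2) * (e + 2) * (b + d + 1) := by
        have h1 : (e + 1) * (b + d + 2) ≤ (e + 2) * (b + d + 1) := by nlinarith [hNb, he]
        calc (k + 1) * (d + 1) * (e + 1) * (b + d + 2)
            = ((k + 1) * (d + 1)) * ((e + 1) * (b + d + 2)) := by ring
          _ ≤ ((k + 2) * (d + 2)) * ((e + 2) * (b + d + 1)) :=
              Nat.mul_le_mul (Nat.mul_le_mul (by omega) (by omega)) h1
          _ = (d + 2) * (k + 2) * (e + 2) * (b + d + 1) := by ring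
      -- multiply everything out
      have key : (x0 * y0 * (x2 * y2)) * ((d + 2) * (k + 2) * (e + 2) * (b + d + 1))
          = (x1 * y1) ^ 2 * ((k + 1) * (d + 1) * (e + 1) * (b + d + 2)) := by
        calc (x0 * y0 * (x2 * y2)) * ((d + 2) * (k + 2) * (e + 2) * (b + d + 1))
            = (x0 * (d + 2)) * (x2 * (k + 2)) * ((y0 * (e + 2)) * ((b + d + 1) * y2)) := by ring
          _ = (x1 * (k + 1)) * (x1 * (d + 1)) * (((b + d + 2) * y1) * (y1 * (e + 1))) := by
              rw [hx1, hx2, hy1, ← hy2]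
          _ = (x1 * y1) ^ 2 * ((k + 1) * (d + 1) * (e + 1) * (b + d + 2)) := by ring
      have hpos : 0 < (d + 2) * (k + 2) * (e + 2) * (b + d + 1) := by positivity
      have : (x0 * y0 * (x2 * y2)) * ((d + 2) * (k + 2) * (e + 2) * (b + d + 1))
          ≤ ((x1 * y1) ^ 2) * ((d + 2) * (k + 2) * (e + 2) * (b + d + 1)) := by
        rw [key]
        exact Nat.mul_le_mul_left _ hscal
      exact Nat.le_of_mul_le_mul_right this hpos
    · rw [hP0]
      simp only [if_neg hk]
      simp
  -- P0 has no internal zeros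
  have hsupp : Supp P0 := by
    intro k h
    rw [hP0] at h ⊢
    by_cases hk : k + 1 ≤ N
    · simp only [if_pos (by omega : k ≤ N)]
      have h1 : 0 < c.choose k := Nat.choose_pos (by omega)
      have h2 : 0 < (b + c - k).choose (N - k) := Nat.choose_pos (by omega)
      positivity
    · simp only [if_neg hk] at h
      exact absurd rfl h
  -- iterate identity
  have iter_eq : ∀ m k, (Aop^[m] P0) k = ∑ i ∈ Finset.range (N + 1),
      b.choose i * c.choose (N - i) * (m + N - i).choose k := by
    intro m
    induction m with
    | zero =>
        intro k
        simp only [Function.iterate_zero, id_eq]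
        rw [base k]
        apply Finset.sum_congr rfl
        intro i hi
        simp only [Finset.mem_range] at hi
        rw [show 0 + N - i = N - i by omega]
    | succ m ih =>
        intro k
        rw [Function.iterate_succ_apply']
        rw [show (Aop^[m] P0) = (fun j => ∑ i ∈ Finset.range (N + 1),
            b.choose i * c.choose (N - i) * (m + N - i).choose j) from funext ih, Aop_sum]
        apply Finset.sum_congr rfl
        intro i hi
        simp only [Finset.mem_range] at hi
        have : Aop (fun j => b.choose i * c.choose (N - i) * (m + N - i).choose j) k
            = b.choose i * c.choose (N - i) * Aop (fun j => (m + N - i).choose j) k := by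
          simp only [Aop]
          split <;> ring
        rw [this, Aop_choose]
        rw [show m + N - i + 1 = m + 1 + N - i by omega]
  have hLCm := LC_iter hlc hsupp (a + b + c - N)
  intro k hk
  obtain ⟨j, rfl⟩ : ∃ j, k = j + 1 := ⟨k - 1, by omega⟩
  have hm : ∀ i ∈ Finset.range (N + 1), (a + b + c - N) + N - i = a + b + c - i := by
    intro i hi
    simp only [Finset.mem_range] at hi
    omega
  have final_eq : ∀ k, (Aop^[a + b + c - N] P0) k = ∑ i ∈ Finset.range (N + 1),
      b.choose i * c.choose (N - i) * (a + b + c - i).choose k := by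
    intro k
    rw [iter_eq]
    exact Finset.sum_congr rfl (fun i hi => by rw [hm i hi])
  have hlcj := hLCm j
  rw [final_eq, final_eq, final_eq] at hlcj
  simp only [Nat.add_sub_cancel]
  exact hlcj
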